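/- The coboundary operator associated to the triple (ρ,θ,Φ) squares to zero: for every p and every ψ ∈ ∧^p(U,V), δ^{p+1}(δ^p ψ) = 0. -/

import Mathlib

open scoped BigOperators

/-- The raw coboundary formula of Hochschild–Serre/Chevalley–Eilenberg type associated to a
triple `(r, t, f)` consisting of (the underlying functions of) a bracket `r` on `U`, a bracket
`t` on `V` and a map `f : U → V`.  It sends a raw `p`-cochain `ψ : (Fin p → U) → V` to the raw
`(p+1)`-cochain
`δψ(x₀,…,x_p) = ∑ₛ (-1)^(s+1) t(f(xₛ), ψ(x₀,…,x̂ₛ,…,x_p))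
              + ∑_{s<u} (-1)^(s+u+1) ψ(r(xₛ,x_u), x₀,…,x̂ₛ,…,x̂_u,…,x_p)`
(indices starting at `0`, so the signs match the formula of the paper where indices start
at `1`). -/
noncomputable def cobound {U V : Type*} [AddCommGroup V]
    (r : U → U → U) (t : V → V → V) (f : U → V) :
    ∀ p : ℕ, ((Fin p → U) → V) → (Fin (p + 1) → U) → V
  | 0, ψ => fun x => ∑ s : Fin 1, ((-1 : ℤ) ^ ((s : ℕ) + 1)) • t (f (x s)) (ψ Fin.elim0)
  | (p + 1), ψ => fun x =>
      (∑ s : Fin (p + 2),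
        ((-1 : ℤ) ^ ((s : ℕ) + 1)) • t (f (x s)) (ψ fun i => x (s.succAbove i)))
      + ∑ s : Fin (p + 2), ∑ u : Fin (p + 2),
          if h : (s : ℕ) < (u : ℕ) then
            ((-1 : ℤ) ^ ((s : ℕ) + (u : ℕ) + 1)) •
              ψ (Fin.cons (r (x s) (x u)) fun m : Fin p =>
                  x (u.succAbove ((Fin.castLT s
                    (lt_of_lt_of_le h (Nat.lt_succ_iff.mp u.isLt))).succAbove m)))
          else 0

namespace CoboundAux

set_option linter.unusedSectionVars false

variable {U V : Type*} [AddCommGroup U] [AddCommGroup V]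

/-- A raw cochain which is additive in each slot and vanishes when two entries coincide. -/
structure IsAltF (p : ℕ) (ψ : (Fin p → U) → V) : Prop where
  add : ∀ (x : Fin p → U) (i : Fin p) (a b : U),
    ψ (Function.update x i (a + b)) = ψ (Function.update x i a) + ψ (Function.update x i b)
  alt : ∀ (x : Fin p → U) (i j : Fin p), i ≠ j → x i = x j → ψ x = 0

namespace IsAltF

variable {p : ℕ} {ψ : (Fin p → U) → V}

theorem zero (h : IsAltF p ψ) (x : Fin p → U) (i : Fin p) :
    ψ (Function.update x i 0) = 0 := by
  have := h.add x i 0 0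
  rw [add_zero] at this
  exact (left_eq_add.mp this)

theorem neg (h : IsAltF p ψ) (x : Fin p → U) (i : Fin p) (a : U) :
    ψ (Function.update x i (-a)) = -ψ (Function.update x i a) := by
  have := h.add x i a (-a)
  rw [add_neg_cancel, h.zero] at this
  exact eq_neg_of_add_eq_zero_right this.symm

theorem sub (h : IsAltF p ψ) (x : Fin p → U) (i : Fin p) (a b : U) :
    ψ (Function.update x i (a - b)) = ψ (Function.update x i a) - ψ (Function.update x i b) := by
  rw [sub_eq_add_neg, h.add, h.neg, sub_eq_add_neg]

theorem swap (h : IsAltF p ψ) {i j : Fin p} (hij : i ≠ j) (x : Fin p → U) :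
    ψ (x ∘ Equiv.swap i j) = -ψ x := by
  have key : x ∘ Equiv.swap i j
      = Function.update (Function.update x i (x j)) j (x i) := by
    funext m
    rcases eq_or_ne m i with rfl | hmi
    · simp only [Function.comp_apply, Equiv.swap_apply_left]
      rw [Function.update_of_ne hij, Function.update_self]
    · rcases eq_or_ne m j with rfl | hmj
      · simp only [Function.comp_apply, Equiv.swap_apply_right, Function.update_self]
      · simp only [Function.comp_apply, Equiv.swap_apply_of_ne_of_ne hmi hmj,
          Function.update_of_ne hmj, Function.update_of_ne hmi]
  have h0 : ψ (Function.update (Function.update x i (x i + x j)) j (x i + x j)) = 0 := by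
    refine h.alt _ i j hij ?_
    rw [Function.update_of_ne hij, Function.update_self, Function.update_self]
  rw [h.add] at h0
  have hz1 : ψ (Function.update (Function.update x j (x i)) i (x i)) = 0 := by
    refine h.alt _ i j hij ?_
    rw [Function.update_self, Function.update_of_ne (Ne.symm hij), Function.update_self]
  have hz2 : ψ (Function.update x i (x j)) = 0 := by
    refine h.alt _ i j hij ?_
    rw [Function.update_self, Function.update_of_ne (Ne.symm hij)]
  have e1 : ψ (Function.update (Function.update x i (x i + x j)) j (x i))
      = ψ (x ∘ Equiv.swap i j) := by
    calc ψ (Function.update (Function.update x i (x i + x j)) j (x i))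
        = ψ (Function.update (Function.update x j (x i)) i (x i + x j)) :=
          congrArg ψ (Function.update_comm hij _ _ _)
      _ = ψ (Function.update (Function.update x j (x i)) i (x i))
          + ψ (Function.update (Function.update x j (x i)) i (x j)) := h.add _ i _ _
      _ = ψ (Function.update (Function.update x j (x i)) i (x j)) := by rw [hz1, zero_add]
      _ = ψ (Function.update (Function.update x i (x j)) j (x i)) :=
          congrArg ψ (Function.update_comm (Ne.symm hij) _ _ _)
      _ = ψ (x ∘ Equiv.swap i j) := (congrArg ψ key).symm
  have e2 : ψ (Function.update (Function.update x i (x i + x j)) j (x j))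
      = ψ x := by
    have hxj : (Function.update x i (x i + x j)) j = x j :=
      Function.update_of_ne (Ne.symm hij) _ _
    have hself : Function.update (Function.update x i (x i + x j)) j (x j)
        = Function.update x i (x i + x j) := by
      funext m
      rcases eq_or_ne m j with rfl | hmj
      · rw [Function.update_self, hxj]
      · rw [Function.update_of_ne hmj]
    calc ψ (Function.update (Function.update x i (x i + x j)) j (x j))
        = ψ (Function.update x i (x i + x j)) := congrArg ψ hself
      _ = ψ (Function.update x i (x i)) + ψ (Function.update x i (x j)) := h.add _ i _ _
      _ = ψ x := by rw [hz2, add_zero, Function.update_eq_self]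
  rw [e1, e2] at h0
  exact eq_neg_of_add_eq_zero_left h0

theorem cons_add {n : ℕ} {ψ : (Fin (n+1) → U) → V} (h : IsAltF (n+1) ψ)
    (a b : U) (y : Fin n → U) :
    ψ (Fin.cons (a + b) y) = ψ (Fin.cons a y) + ψ (Fin.cons b y) := by
  have := h.add (Fin.cons a y) 0 a b
  rwa [Fin.update_cons_zero, Fin.update_cons_zero, Fin.update_cons_zero] at this

theorem cons_zero_val {n : ℕ} {ψ : (Fin (n+1) → U) → V} (h : IsAltF (n+1) ψ)
    (y : Fin n → U) : ψ (Fin.cons 0 y) = 0 := by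
  have := h.zero (Fin.cons 0 y) 0
  rwa [Fin.update_cons_zero] at this

theorem cons_neg {n : ℕ} {ψ : (Fin (n+1) → U) → V} (h : IsAltF (n+1) ψ)
    (a : U) (y : Fin n → U) :
    ψ (Fin.cons (-a) y) = - ψ (Fin.cons a y) := by
  have := h.neg (Fin.cons a y) 0 a
  rwa [Fin.update_cons_zero, Fin.update_cons_zero] at this

end IsAltF

/-- The transposition `(i, i+1)` intertwines the two coface maps. -/
theorem swap_comp_succAbove {n : ℕ} (i m : Fin n) :
    Equiv.swap i.castSucc i.succ (i.castSucc.succAbove m) = i.succ.succAbove m := by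
  rcases lt_trichotomy (m : ℕ) (i : ℕ) with hlt | heq | hgt
  · rw [Fin.succAbove_of_castSucc_lt _ _
        (by simp only [Fin.lt_def, Fin.coe_castSucc]; omega),
      Fin.succAbove_of_castSucc_lt _ _
        (by simp only [Fin.lt_def, Fin.coe_castSucc, Fin.val_succ]; omega),
      Equiv.swap_apply_of_ne_of_ne
        (by simp only [ne_eq, Fin.ext_iff, Fin.coe_castSucc]; omega)
        (by simp only [ne_eq, Fin.ext_iff, Fin.coe_castSucc, Fin.val_succ]; omega)]
  · have hmi : m = i := Fin.ext heq
    subst hmi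
    rw [Fin.succAbove_of_le_castSucc _ _ (le_refl _), Equiv.swap_apply_right,
      Fin.succAbove_of_castSucc_lt _ _ (Fin.castSucc_lt_succ (i := m))]
  · rw [Fin.succAbove_of_le_castSucc _ _
        (by simp only [Fin.le_def, Fin.coe_castSucc]; omega),
      Fin.succAbove_of_le_castSucc _ _
        (by simp only [Fin.le_def, Fin.coe_castSucc, Fin.val_succ]; omega),
      Equiv.swap_apply_of_ne_of_ne
        (by simp only [ne_eq, Fin.ext_iff, Fin.coe_castSucc, Fin.val_succ]; omega)
        (by simp only [ne_eq, Fin.ext_iff, Fin.val_succ]; omega)]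

/-- Moving an entry to the front of an alternating cochain costs a sign. -/
theorem IsAltF.cons_succAbove {n : ℕ} {ψ : (Fin (n+1) → U) → V} (h : IsAltF (n+1) ψ)
    (j : Fin (n+1)) (x : Fin (n+1) → U) (b : U) :
    ψ (Fin.cons b (fun m => x (j.succAbove m)))
      = ((-1 : ℤ) ^ (j : ℕ)) • ψ (Function.update x j b) := by
  induction j using Fin.induction generalizing x b with
  | zero =>
      have e : Fin.cons b (fun m => x ((0 : Fin (n+1)).succAbove m))
          = Function.update x 0 b := by
        funext m
        induction m using Fin.cases with
        | zero => rw [Fin.cons_zero, Function.update_self]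
        | succ m' =>
            rw [Fin.cons_succ, Function.update_of_ne (Fin.succ_ne_zero m'),
              Fin.zero_succAbove]
      rw [e, Fin.val_zero, pow_zero, one_smul]
  | succ i ih =>
      have hne : i.castSucc ≠ i.succ := (Fin.castSucc_lt_succ (i := i)).ne
      have ht1 : Equiv.swap i.castSucc i.succ i.castSucc = i.succ :=
        Equiv.swap_apply_left _ _
      have ht2 : Equiv.swap i.castSucc i.succ i.succ = i.castSucc :=
        Equiv.swap_apply_right _ _
      have hF1 : (fun m => x (i.succ.succAbove m))
          = fun m => (x ∘ Equiv.swap i.castSucc i.succ) (i.castSucc.succAbove m) := by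
        funext m
        rw [Function.comp_apply, swap_comp_succAbove]
      have hF2 : Function.update (x ∘ Equiv.swap i.castSucc i.succ) i.castSucc b
          = (Function.update x i.succ b) ∘ Equiv.swap i.castSucc i.succ := by
        funext m
        rcases eq_or_ne m i.castSucc with rfl | hm1
        · rw [Function.update_self, Function.comp_apply, ht1, Function.update_self]
        · rcases eq_or_ne m i.succ with rfl | hm2
          · rw [Function.update_of_ne (Ne.symm hne), Function.comp_apply,
              Function.comp_apply, ht2, Function.update_of_ne hne]
          · have ht3 : Equiv.swap i.castSucc i.succ m = m :=
              Equiv.swap_apply_of_ne_of_ne hm1 hm2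
            rw [Function.update_of_ne hm1, Function.comp_apply, Function.comp_apply,
              ht3, Function.update_of_ne hm2]
      rw [hF1, ih (x ∘ Equiv.swap i.castSucc i.succ) b, hF2, h.swap hne,
        Fin.coe_castSucc, Fin.val_succ, pow_succ, mul_comm, mul_smul, neg_one_zsmul,
        smul_neg]

/-- Swapping the first two entries of an alternating cochain costs a sign. -/
theorem IsAltF.cons_cons_comm {n : ℕ} {ψ : (Fin (n+2) → U) → V} (h : IsAltF (n+2) ψ)
    (a b : U) (y : Fin n → U) :
    ψ (Fin.cons a (Fin.cons b y)) = - ψ (Fin.cons b (Fin.cons a y)) := by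
  have key : Fin.cons b (Fin.cons a y)
      = (Fin.cons a (Fin.cons b y)) ∘ Equiv.swap (0 : Fin (n+2)) 1 := by
    funext m
    induction m using Fin.cases with
    | zero =>
        simp only [Function.comp_apply, Equiv.swap_apply_left, Fin.cons_zero]
        rw [show (1 : Fin (n+2)) = (0 : Fin (n+1)).succ by rfl, Fin.cons_succ, Fin.cons_zero]
    | succ m' =>
        induction m' using Fin.cases with
        | zero =>
            simp only [Function.comp_apply]
            rw [show ((0 : Fin (n+1)).succ) = (1 : Fin (n+2)) by rfl,
              Equiv.swap_apply_right, Fin.cons_zero,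
              show (1 : Fin (n+2)) = (0 : Fin (n+1)).succ by rfl, Fin.cons_succ, Fin.cons_zero]
        | succ m'' =>
            have h0 : (m''.succ.succ : Fin (n+2)) ≠ 0 := Fin.succ_ne_zero _
            have h1 : (m''.succ.succ : Fin (n+2)) ≠ 1 := by
              simp only [ne_eq, Fin.ext_iff, Fin.val_succ, Fin.val_one]; omega
            simp only [Function.comp_apply, Equiv.swap_apply_of_ne_of_ne h0 h1,
              Fin.cons_succ]
  have := h.swap (show (0 : Fin (n+2)) ≠ 1 from Fin.zero_ne_one) (Fin.cons a (Fin.cons b y))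
  rw [← key] at this
  rw [this, neg_neg]

/-- Contraction of a cochain with a vector in the first slot. -/
def iota (a : U) {p : ℕ} (ψ : (Fin (p+1) → U) → V) : (Fin p → U) → V :=
  fun x => ψ (Fin.cons a x)

theorem IsAltF.iota {p : ℕ} {ψ : (Fin (p+1) → U) → V} (h : IsAltF (p+1) ψ) (a : U) :
    IsAltF p (CoboundAux.iota a ψ) := by
  constructor
  · intro x i b c
    simp only [CoboundAux.iota]
    rw [Fin.cons_update, Fin.cons_update, Fin.cons_update]
    exact h.add (Fin.cons a x) i.succ b c
  · intro x i j hij hx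
    refine h.alt (Fin.cons a x) i.succ j.succ (fun hc => hij (Fin.succ_injective _ hc)) ?_
    rw [Fin.cons_succ, Fin.cons_succ]
    exact hx

theorem cons_comp_zero {n : ℕ} (a : U) (x : Fin (n+1) → U) :
    (fun m : Fin (n+1) => (Fin.cons a x : Fin (n+2) → U) ((0 : Fin (n+2)).succAbove m)) = x :=
  funext fun m => by rw [Fin.zero_succAbove, Fin.cons_succ]

theorem cons_comp_succ {n : ℕ} (a : U) (x : Fin (n+1) → U) (j : Fin (n+1)) :
    (fun m : Fin (n+1) => (Fin.cons a x : Fin (n+2) → U) (j.succ.succAbove m))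
      = Fin.cons a (fun m : Fin n => x (j.succAbove m)) := by
  funext m
  induction m using Fin.cases with
  | zero => rw [Fin.succ_succAbove_zero, Fin.cons_zero, Fin.cons_zero]
  | succ m' => rw [Fin.succ_succAbove_succ, Fin.cons_succ, Fin.cons_succ]

theorem update_cons_succ {n : ℕ} (a : U) (x : Fin n → U) (i : Fin n) (v : U) :
    Function.update (Fin.cons a x : Fin (n+1) → U) i.succ v
      = Fin.cons a (Function.update x i v) := by
  rw [Fin.cons_update]

section Leibniz

variable {k W : Type*} [Field k] [AddCommGroup W] [Module k W]

theorem skew_of (B : W →ₗ[k] W →ₗ[k] W) (halt : ∀ x, B x x = 0) :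
    ∀ x y : W, B x y = - B y x := by
  intro x y
  have h := halt (x + y)
  simp only [map_add, LinearMap.add_apply, halt, zero_add, add_zero] at h
  first
  | exact eq_neg_of_add_eq_zero_left h
  | exact eq_neg_of_add_eq_zero_right h

theorem leib_of (B : W →ₗ[k] W →ₗ[k] W) (halt : ∀ x, B x x = 0)
    (hjac : ∀ x y z, B (B x y) z + B (B y z) x + B (B z x) y = 0) :
    ∀ x y z, B (B x y) z = B x (B y z) - B y (B x z) := by
  have hskew := skew_of B halt
  intro x y z
  have h := hjac x y z
  rw [hskew (B y z) x, hskew z x, map_neg, LinearMap.neg_apply, hskew (B x z) y,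
    neg_neg] at h
  have h' : B (B x y) z + B y (B x z) - B x (B y z) = 0 := by
    rw [← h]; abel
  have h'' : B (B x y) z + B y (B x z) = B x (B y z) := sub_eq_zero.mp h'
  rw [← h'']
  abel

end Leibniz

section Brackets

variable {k : Type*} [Field k] [Module k U] [Module k V]
variable (ρ : U →ₗ[k] U →ₗ[k] U) (θ : V →ₗ[k] V →ₗ[k] V) (Φ : U →ₗ[k] V)

local notation "D" => cobound (fun a b => ρ a b) (fun x y => θ x y) (fun a => Φ a)

/-- The Lie derivative of a raw cochain. -/
def lieD (a : U) {p : ℕ} (ψ : (Fin p → U) → V) : (Fin p → U) → V :=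
  fun x => θ (Φ a) (ψ x) - ∑ i : Fin p, ψ (Function.update x i (ρ a (x i)))

theorem cobound_add (p : ℕ) (F G : (Fin p → U) → V) :
    D p (fun x => F x + G x) = fun y => D p F y + D p G y := by
  funext y
  cases p with
  | zero => simp [cobound, map_add, smul_add, Finset.sum_add_distrib]
  | succ q =>
      simp only [cobound]
      rw [show (∑ s : Fin (q+2), ((-1:ℤ) ^ ((s:ℕ)+1)) •
            θ (Φ (y s)) ((fun x => F x + G x) (fun i => y (s.succAbove i))))
          = (∑ s : Fin (q+2), ((-1:ℤ) ^ ((s:ℕ)+1)) • θ (Φ (y s)) (F (fun i => y (s.succAbove i))))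
            + ∑ s : Fin (q+2), ((-1:ℤ) ^ ((s:ℕ)+1)) • θ (Φ (y s)) (G (fun i => y (s.succAbove i)))
          from by
            rw [← Finset.sum_add_distrib]
            refine Finset.sum_congr rfl fun s _ => ?_
            simp only [map_add, smul_add]]
      rw [show (∑ s : Fin (q+2), ∑ u : Fin (q+2),
            if h : (s : ℕ) < (u : ℕ) then
              ((-1 : ℤ) ^ ((s : ℕ) + (u : ℕ) + 1)) •
                (fun x => F x + G x) (Fin.cons (ρ (y s) (y u)) fun m : Fin q =>
                  y (u.succAbove ((Fin.castLT s
                    (lt_of_lt_of_le h (Nat.lt_succ_iff.mp u.isLt))).succAbove m)))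
            else 0)
          = (∑ s : Fin (q+2), ∑ u : Fin (q+2),
            if h : (s : ℕ) < (u : ℕ) then
              ((-1 : ℤ) ^ ((s : ℕ) + (u : ℕ) + 1)) •
                F (Fin.cons (ρ (y s) (y u)) fun m : Fin q =>
                  y (u.succAbove ((Fin.castLT s
                    (lt_of_lt_of_le h (Nat.lt_succ_iff.mp u.isLt))).succAbove m)))
            else 0)
            + ∑ s : Fin (q+2), ∑ u : Fin (q+2),
            if h : (s : ℕ) < (u : ℕ) then
              ((-1 : ℤ) ^ ((s : ℕ) + (u : ℕ) + 1)) •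
                G (Fin.cons (ρ (y s) (y u)) fun m : Fin q =>
                  y (u.succAbove ((Fin.castLT s
                    (lt_of_lt_of_le h (Nat.lt_succ_iff.mp u.isLt))).succAbove m)))
            else 0
          from by
            rw [← Finset.sum_add_distrib]
            refine Finset.sum_congr rfl fun s _ => ?_
            rw [← Finset.sum_add_distrib]
            refine Finset.sum_congr rfl fun u _ => ?_
            split_ifs with h
            · simp only [smul_add]
            · rw [add_zero]]
      abel

theorem cobound_zero_fun (p : ℕ) :
    D p (fun _ => (0 : V)) = fun _ => 0 := by
  funext y
  cases p with
  | zero => simp [cobound]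
  | succ q => simp [cobound]

theorem cobound_sub (p : ℕ) (F G : (Fin p → U) → V) :
    D p (fun x => F x - G x) = fun y => D p F y - D p G y := by
  funext y
  cases p with
  | zero => simp [cobound, map_sub, smul_sub, Finset.sum_sub_distrib]
  | succ q =>
      simp only [cobound]
      rw [show (∑ s : Fin (q+2), ((-1:ℤ) ^ ((s:ℕ)+1)) •
            θ (Φ (y s)) ((fun x => F x - G x) (fun i => y (s.succAbove i))))
          = (∑ s : Fin (q+2), ((-1:ℤ) ^ ((s:ℕ)+1)) • θ (Φ (y s)) (F (fun i => y (s.succAbove i))))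
            - ∑ s : Fin (q+2), ((-1:ℤ) ^ ((s:ℕ)+1)) • θ (Φ (y s)) (G (fun i => y (s.succAbove i)))
          from by
            rw [← Finset.sum_sub_distrib]
            refine Finset.sum_congr rfl fun s _ => ?_
            simp only [map_sub, smul_sub]]
      rw [show (∑ s : Fin (q+2), ∑ u : Fin (q+2),
            if h : (s : ℕ) < (u : ℕ) then
              ((-1 : ℤ) ^ ((s : ℕ) + (u : ℕ) + 1)) •
                (fun x => F x - G x) (Fin.cons (ρ (y s) (y u)) fun m : Fin q =>
                  y (u.succAbove ((Fin.castLT s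
                    (lt_of_lt_of_le h (Nat.lt_succ_iff.mp u.isLt))).succAbove m)))
            else 0)
          = (∑ s : Fin (q+2), ∑ u : Fin (q+2),
            if h : (s : ℕ) < (u : ℕ) then
              ((-1 : ℤ) ^ ((s : ℕ) + (u : ℕ) + 1)) •
                F (Fin.cons (ρ (y s) (y u)) fun m : Fin q =>
                  y (u.succAbove ((Fin.castLT s
                    (lt_of_lt_of_le h (Nat.lt_succ_iff.mp u.isLt))).succAbove m)))
            else 0)
            - ∑ s : Fin (q+2), ∑ u : Fin (q+2),
            if h : (s : ℕ) < (u : ℕ) then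
              ((-1 : ℤ) ^ ((s : ℕ) + (u : ℕ) + 1)) •
                G (Fin.cons (ρ (y s) (y u)) fun m : Fin q =>
                  y (u.succAbove ((Fin.castLT s
                    (lt_of_lt_of_le h (Nat.lt_succ_iff.mp u.isLt))).succAbove m)))
            else 0
          from by
            rw [← Finset.sum_sub_distrib]
            refine Finset.sum_congr rfl fun s _ => ?_
            rw [← Finset.sum_sub_distrib]
            refine Finset.sum_congr rfl fun u _ => ?_
            split_ifs with h
            · simp only [smul_sub]
            · rw [sub_zero]]
      abel

theorem cobound_neg (p : ℕ) (F : (Fin p → U) → V) :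
    D p (fun x => - F x) = fun y => - D p F y := by
  have h := cobound_sub ρ θ Φ p (fun _ => (0:V)) F
  simp only [zero_sub] at h
  rw [h]
  funext y
  rw [congrFun (cobound_zero_fun ρ θ Φ p) y, zero_sub]

theorem IsAltF.lieD {p : ℕ} {ψ : (Fin p → U) → V} (h : IsAltF p ψ) (a : U) :
    IsAltF p (lieD ρ θ Φ a ψ) := by
  constructor
  · intro x i b c
    simp only [CoboundAux.lieD]
    have hθ : θ (Φ a) (ψ (Function.update x i (b + c)))
        = θ (Φ a) (ψ (Function.update x i b)) + θ (Φ a) (ψ (Function.update x i c)) := by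
      rw [h.add, map_add]
    have hsum : ∀ l : Fin p,
        ψ (Function.update (Function.update x i (b+c)) l (ρ a ((Function.update x i (b+c)) l)))
        = ψ (Function.update (Function.update x i b) l (ρ a ((Function.update x i b) l)))
          + ψ (Function.update (Function.update x i c) l (ρ a ((Function.update x i c) l))) := by
      intro l
      rcases eq_or_ne l i with rfl | hl
      · rw [Function.update_self, Function.update_self, Function.update_self,
          Function.update_idem, Function.update_idem, Function.update_idem, map_add, h.add]
      · rw [Function.update_of_ne hl, Function.update_of_ne hl, Function.update_of_ne hl,
          Function.update_comm (Ne.symm hl), Function.update_comm (Ne.symm hl),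
          Function.update_comm (Ne.symm hl), h.add]
    rw [hθ, Finset.sum_congr rfl fun l _ => hsum l, Finset.sum_add_distrib]
    abel
  · intro x i j hij hx
    simp only [CoboundAux.lieD]
    rw [h.alt x i j hij hx, map_zero]
    have hzero : ∀ l : Fin p, l ≠ i → l ≠ j →
        ψ (Function.update x l (ρ a (x l))) = 0 := by
      intro l hli hlj
      exact h.alt _ i j hij (by
        rw [Function.update_of_ne (Ne.symm hli), Function.update_of_ne (Ne.symm hlj)]
        exact hx)
    have hcancel : ψ (Function.update x j (ρ a (x j)))
        = - ψ (Function.update x i (ρ a (x i))) := by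
      have hkey : (Function.update x i (ρ a (x i))) ∘ Equiv.swap i j
          = Function.update x j (ρ a (x j)) := by
        funext m
        rcases eq_or_ne m i with rfl | hmi
        · rw [Function.comp_apply, Equiv.swap_apply_left, Function.update_of_ne (Ne.symm hij),
            Function.update_of_ne hij]
          exact hx.symm
        · rcases eq_or_ne m j with rfl | hmj
          · rw [Function.comp_apply, Equiv.swap_apply_right, Function.update_self,
              Function.update_self, hx]
          · rw [Function.comp_apply, Equiv.swap_apply_of_ne_of_ne hmi hmj,
              Function.update_of_ne hmi, Function.update_of_ne hmj]
      rw [← hkey, h.swap hij]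
    have hsum : ∑ l : Fin p, ψ (Function.update x l (ρ a (x l))) = 0 := by
      have hsub : ∑ l : Fin p, ψ (Function.update x l (ρ a (x l)))
          = ∑ l ∈ ({i, j} : Finset (Fin p)), ψ (Function.update x l (ρ a (x l))) := by
        refine (Finset.sum_subset (Finset.subset_univ _) fun l _ hl => ?_).symm
        simp only [Finset.mem_insert, Finset.mem_singleton, not_or] at hl
        exact hzero l hl.1 hl.2
      rw [hsub, Finset.sum_pair hij, hcancel, add_neg_cancel]
    rw [hsum, zero_sub, neg_zero]

theorem lieD_add_fun (a : U) {p : ℕ} (F G : (Fin p → U) → V) :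
    lieD ρ θ Φ a (fun x => F x + G x) = fun x => lieD ρ θ Φ a F x + lieD ρ θ Φ a G x := by
  funext x
  simp only [lieD, map_add, Finset.sum_add_distrib]
  abel

theorem lieD_neg_fun (a : U) {p : ℕ} (F : (Fin p → U) → V) :
    lieD ρ θ Φ a (fun x => - F x) = fun x => - lieD ρ θ Φ a F x := by
  funext x
  simp only [lieD, map_neg, Finset.sum_neg_distrib]
  abel

theorem lieD_sub_fun (a : U) {p : ℕ} (F G : (Fin p → U) → V) :
    lieD ρ θ Φ a (fun x => F x - G x) = fun x => lieD ρ θ Φ a F x - lieD ρ θ Φ a G x := by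
  funext x
  simp only [lieD, map_sub, Finset.sum_sub_distrib]
  abel

theorem lieD_add_a {p : ℕ} {ψ : (Fin p → U) → V} (h : IsAltF p ψ) (a b : U) :
    lieD ρ θ Φ (a + b) ψ = fun x => lieD ρ θ Φ a ψ x + lieD ρ θ Φ b ψ x := by
  funext x
  simp only [lieD]
  have h1 : θ (Φ (a + b)) (ψ x) = θ (Φ a) (ψ x) + θ (Φ b) (ψ x) := by
    rw [map_add, map_add, LinearMap.add_apply]
  have h2 : ∀ i : Fin p, ψ (Function.update x i (ρ (a+b) (x i)))
      = ψ (Function.update x i (ρ a (x i))) + ψ (Function.update x i (ρ b (x i))) := by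
    intro i
    rw [map_add, LinearMap.add_apply, h.add]
  rw [h1, Finset.sum_congr rfl fun i _ => h2 i, Finset.sum_add_distrib]
  abel

theorem iota_add_a {p : ℕ} {ψ : (Fin (p+1) → U) → V} (h : IsAltF (p+1) ψ) (a b : U) :
    CoboundAux.iota (a + b) ψ = fun x => CoboundAux.iota a ψ x + CoboundAux.iota b ψ x := by
  funext x
  exact h.cons_add a b x

/-- Contraction against the Lie derivative: `ι_b ∘ L_a = L_a ∘ ι_b - ι_{[a,b]}`. -/
theorem iota_lieD (a b : U) {p : ℕ} (η : (Fin (p+1) → U) → V) :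
    CoboundAux.iota b (lieD ρ θ Φ a η)
      = fun x => lieD ρ θ Φ a (CoboundAux.iota b η) x - CoboundAux.iota (ρ a b) η x := by
  funext x
  simp only [CoboundAux.iota, lieD, Fin.sum_univ_succ, Fin.cons_zero, Fin.cons_succ,
    Fin.update_cons_zero, update_cons_succ]
  abel

/-- The Lie derivative is a Lie-algebra action on raw cochains:
`L_a L_b - L_b L_a = L_{[a,b]}`. -/
theorem lieD_lieD_comm (hρalt : ∀ a : U, ρ a a = 0)
    (hρjac : ∀ a b c : U, ρ (ρ a b) c + ρ (ρ b c) a + ρ (ρ c a) b = 0)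
    (hθalt : ∀ x : V, θ x x = 0)
    (hθjac : ∀ x y z : V, θ (θ x y) z + θ (θ y z) x + θ (θ z x) y = 0)
    (hΦ : ∀ a b : U, Φ (ρ a b) = θ (Φ a) (Φ b))
    {p : ℕ} {ψ : (Fin p → U) → V} (h : IsAltF p ψ) (a b : U) :
    (fun x => lieD ρ θ Φ a (lieD ρ θ Φ b ψ) x - lieD ρ θ Φ b (lieD ρ θ Φ a ψ) x)
      = lieD ρ θ Φ (ρ a b) ψ := by
  have hρleib := leib_of ρ hρalt hρjac
  have hθleib := leib_of θ hθalt hθjac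
  funext x
  simp only [lieD, map_sub, map_sum]
  rw [Finset.sum_sub_distrib, Finset.sum_sub_distrib]
  have hAB : θ (Φ (ρ a b)) (ψ x) = θ (Φ a) (θ (Φ b) (ψ x)) - θ (Φ b) (θ (Φ a) (ψ x)) := by
    rw [hΦ, hθleib]
  -- the two iterated double sums
  set Gab : Fin p → Fin p → V := fun i l =>
    ψ (Function.update (Function.update x i (ρ a (x i))) l
        (ρ b (Function.update x i (ρ a (x i)) l))) with hGab
  set Gba : Fin p → Fin p → V := fun i l =>
    ψ (Function.update (Function.update x i (ρ b (x i))) l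
        (ρ a (Function.update x i (ρ b (x i)) l))) with hGba
  have hsymm : ∀ i l : Fin p, i ≠ l → Gab i l = Gba l i := by
    intro i l hil
    simp only [hGab, hGba]
    rw [Function.update_of_ne (Ne.symm hil), Function.update_of_ne hil,
      Function.update_comm hil]
  have hdiag : ∀ i : Fin p, Gba i i - Gab i i
      = ψ (Function.update x i (ρ (ρ a b) (x i))) := by
    intro i
    simp only [hGab, hGba]
    rw [Function.update_self, Function.update_self, Function.update_idem,
      Function.update_idem, ← h.sub, ← hρleib]
  have hdd : ∑ i : Fin p, ψ (Function.update x i (ρ (ρ a b) (x i)))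
      = (∑ i : Fin p, ∑ l : Fin p, Gba i l) - ∑ i : Fin p, ∑ l : Fin p, Gab i l := by
    rw [show (∑ i : Fin p, ∑ l : Fin p, Gab i l) = ∑ i : Fin p, ∑ l : Fin p, Gab l i from
      Finset.sum_comm, ← Finset.sum_sub_distrib]
    refine (Finset.sum_congr rfl fun i _ => ?_).symm
    rw [← Finset.sum_sub_distrib]
    rw [Finset.sum_eq_single i
      (fun l _ hl => by rw [hsymm l i hl, sub_self])
      (fun hi => absurd (Finset.mem_univ i) hi)]
    exact hdiag i
  rw [hAB, hdd]
  abel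

theorem fin0_eq (z w : Fin 0 → U) : z = w := funext fun m => m.elim0

theorem cons_eq_update0 (x : Fin 1 → U) (v : U) (z : Fin 0 → U) :
    (Fin.cons v z : Fin 1 → U) = Function.update x 0 v := by
  funext m
  have hm : m = 0 := Fin.ext (by omega)
  rw [hm, Fin.cons_zero, Function.update_self]

theorem tuple1 {q : ℕ} (a : U) (x : Fin (q+1) → U) (j : Fin (q+1))
    (h₁ : ((0 : Fin (q+2)) : ℕ) < q+1) :
    (fun m : Fin q => (Fin.cons a x : Fin (q+2) → U)
        (j.succ.succAbove ((Fin.castLT (0 : Fin (q+2)) h₁).succAbove m)))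
      = fun m => x (j.succAbove m) := by
  have hc : Fin.castLT (0 : Fin (q+2)) h₁ = 0 := rfl
  rw [hc]
  funext m
  rw [Fin.zero_succAbove, Fin.succ_succAbove_succ, Fin.cons_succ]

theorem tuple2 {q' : ℕ} (a : U) (x : Fin (q'+2) → U) (i j : Fin (q'+2))
    (h₁ : ((i.succ : Fin (q'+3)) : ℕ) < q'+2) (h₂ : (i : ℕ) < q'+1) :
    (fun m : Fin (q'+1) => (Fin.cons a x : Fin (q'+3) → U)
        (j.succ.succAbove ((Fin.castLT (i.succ : Fin (q'+3)) h₁).succAbove m)))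
      = Fin.cons a (fun m : Fin q' => x (j.succAbove ((Fin.castLT i h₂).succAbove m))) := by
  have hc : (Fin.castLT (i.succ : Fin (q'+3)) h₁) = (Fin.castLT i h₂).succ := by
    apply Fin.ext
    simp [Fin.val_succ]
  rw [hc]
  funext m
  induction m using Fin.cases with
  | zero => rw [Fin.succ_succAbove_zero, Fin.succ_succAbove_zero, Fin.cons_zero, Fin.cons_zero]
  | succ m' =>
      rw [Fin.succ_succAbove_succ, Fin.succ_succAbove_succ, Fin.cons_succ, Fin.cons_succ]

/-- The Cartan-type formula: contracting the coboundary. `ι_a δψ = -L_a ψ - δ (ι_a ψ)`. -/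
theorem cartan {q : ℕ} {ψ : (Fin (q+1) → U) → V} (h : IsAltF (q+1) ψ) (a : U)
    (x : Fin (q+1) → U) :
    D (q+1) ψ (Fin.cons a x)
      = - lieD ρ θ Φ a ψ x - D q (CoboundAux.iota a ψ) x := by
  cases q with
  | zero =>
      simp only [cobound, lieD, CoboundAux.iota]
      rw [Fin.sum_univ_two, Fin.sum_univ_two, Fin.sum_univ_two, Fin.sum_univ_two,
        Fin.sum_univ_one, Fin.sum_univ_one]
      rw [dif_neg (lt_irrefl _), dif_neg (by omega : ¬ ((1 : Fin 2) : ℕ) < ((0 : Fin 2) : ℕ)),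
        dif_neg (lt_irrefl _), dif_pos (by omega : ((0 : Fin 2) : ℕ) < ((1 : Fin 2) : ℕ))]
      rw [cons_comp_zero]
      have e1 : (fun i : Fin 1 => (Fin.cons a x : Fin 2 → U) ((1 : Fin 2).succAbove i))
          = Fin.cons a Fin.elim0 := by
        funext i
        have hi : i = 0 := Fin.ext (by omega)
        subst hi
        have hs : (1 : Fin 2).succAbove 0 = 0 := by decide
        rw [hs, Fin.cons_zero, Fin.cons_zero]
      have e2 : (Fin.cons a x : Fin 2 → U) 1 = x 0 := by
        have h10 : (1 : Fin 2) = (0 : Fin 1).succ := by decide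
        rw [h10, Fin.cons_succ]
      simp only [e1, e2, Fin.cons_zero]
      rw [cons_eq_update0 x (ρ a (x 0))]
      simp only [Fin.val_zero, Fin.val_one]
      norm_num
      abel
  | succ q' =>
      simp only [cobound]
      -- the θ-part
      have hA : (∑ s : Fin (q'+3), ((-1:ℤ)^((s:ℕ)+1)) •
            θ (Φ ((Fin.cons a x : Fin (q'+3) → U) s))
              (ψ fun i => (Fin.cons a x : Fin (q'+3) → U) (s.succAbove i)))
          = - θ (Φ a) (ψ x)
            - ∑ j : Fin (q'+2), ((-1:ℤ)^((j:ℕ)+1)) •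
                θ (Φ (x j)) (CoboundAux.iota a ψ (fun m => x (j.succAbove m))) := by
        rw [Fin.sum_univ_succ]
        have h0 : ((-1:ℤ)^(((0 : Fin (q'+3)):ℕ)+1)) •
            θ (Φ ((Fin.cons a x : Fin (q'+3) → U) 0))
              (ψ fun i => (Fin.cons a x : Fin (q'+3) → U) ((0 : Fin (q'+3)).succAbove i))
            = - θ (Φ a) (ψ x) := by
          rw [Fin.val_zero, pow_one, Fin.cons_zero, cons_comp_zero, neg_one_zsmul]
        rw [h0]
        have hsucc : ∀ j : Fin (q'+2), ((-1:ℤ)^(((j.succ : Fin (q'+3)):ℕ)+1)) •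
            θ (Φ ((Fin.cons a x : Fin (q'+3) → U) j.succ))
              (ψ fun i => (Fin.cons a x : Fin (q'+3) → U) (j.succ.succAbove i))
            = - (((-1:ℤ)^((j:ℕ)+1)) •
                θ (Φ (x j)) (CoboundAux.iota a ψ (fun m => x (j.succAbove m)))) := by
          intro j
          rw [Fin.cons_succ, cons_comp_succ, Fin.val_succ, pow_succ, mul_smul,
            neg_one_zsmul, smul_neg]
          rfl
        rw [Finset.sum_congr rfl fun j _ => hsucc j, Finset.sum_neg_distrib]
        abel
      rw [hA]
      -- the ρ-part
      have hB : (∑ s : Fin (q'+3), ∑ u : Fin (q'+3),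
            if hsu : (s : ℕ) < (u : ℕ) then
              ((-1 : ℤ) ^ ((s : ℕ) + (u : ℕ) + 1)) •
                ψ (Fin.cons (ρ ((Fin.cons a x : Fin (q'+3) → U) s)
                      ((Fin.cons a x : Fin (q'+3) → U) u)) fun m : Fin (q'+1) =>
                    (Fin.cons a x : Fin (q'+3) → U) (u.succAbove ((Fin.castLT s
                      (lt_of_lt_of_le hsu (Nat.lt_succ_iff.mp u.isLt))).succAbove m)))
            else 0)
          = (∑ j : Fin (q'+2), ψ (Function.update x j (ρ a (x j))))
            - ∑ i : Fin (q'+2), ∑ j : Fin (q'+2),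
              (if hij : (i : ℕ) < (j : ℕ) then
                ((-1 : ℤ) ^ ((i : ℕ) + (j : ℕ) + 1)) •
                  CoboundAux.iota a ψ (Fin.cons (ρ (x i) (x j)) fun m : Fin q' =>
                    x (j.succAbove ((Fin.castLT i
                      (lt_of_lt_of_le hij (Nat.lt_succ_iff.mp j.isLt))).succAbove m)))
              else 0) := by
        rw [Fin.sum_univ_succ]
        have hB0 : (∑ u : Fin (q'+3),
            if hsu : (((0 : Fin (q'+3)) : ℕ)) < (u : ℕ) then
              ((-1 : ℤ) ^ (((0 : Fin (q'+3)) : ℕ) + (u : ℕ) + 1)) •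
                ψ (Fin.cons (ρ ((Fin.cons a x : Fin (q'+3) → U) 0)
                      ((Fin.cons a x : Fin (q'+3) → U) u)) fun m : Fin (q'+1) =>
                    (Fin.cons a x : Fin (q'+3) → U) (u.succAbove ((Fin.castLT (0 : Fin (q'+3))
                      (lt_of_lt_of_le hsu (Nat.lt_succ_iff.mp u.isLt))).succAbove m)))
            else 0)
            = ∑ j : Fin (q'+2), ψ (Function.update x j (ρ a (x j))) := by
          rw [Fin.sum_univ_succ, dif_neg (lt_irrefl _), zero_add]
          refine Finset.sum_congr rfl fun j _ => ?_
          rw [dif_pos (show (((0 : Fin (q'+3)) : ℕ)) < ((j.succ : Fin (q'+3)) : ℕ) by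
            simp [Fin.val_succ])]
          rw [Fin.cons_zero, Fin.cons_succ, tuple1 a x j, h.cons_succAbove, smul_smul]
          rw [show ((-1 : ℤ) ^ (((0 : Fin (q'+3)) : ℕ) + ((j.succ : Fin (q'+3)) : ℕ) + 1)
              * (-1 : ℤ) ^ (j : ℕ)) = 1 from by
            rw [← pow_add, Fin.val_zero, Fin.val_succ]
            exact Even.neg_one_pow ⟨(j : ℕ) + 1, by ring⟩]
          rw [one_smul]
        have hB1 : (∑ i : Fin (q'+2), ∑ u : Fin (q'+3),
            if hsu : ((i.succ : Fin (q'+3)) : ℕ) < (u : ℕ) then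
              ((-1 : ℤ) ^ (((i.succ : Fin (q'+3)) : ℕ) + (u : ℕ) + 1)) •
                ψ (Fin.cons (ρ ((Fin.cons a x : Fin (q'+3) → U) i.succ)
                      ((Fin.cons a x : Fin (q'+3) → U) u)) fun m : Fin (q'+1) =>
                    (Fin.cons a x : Fin (q'+3) → U) (u.succAbove ((Fin.castLT
                      (i.succ : Fin (q'+3))
                      (lt_of_lt_of_le hsu (Nat.lt_succ_iff.mp u.isLt))).succAbove m)))
            else 0)
            = - ∑ i : Fin (q'+2), ∑ j : Fin (q'+2),
              (if hij : (i : ℕ) < (j : ℕ) then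
                ((-1 : ℤ) ^ ((i : ℕ) + (j : ℕ) + 1)) •
                  CoboundAux.iota a ψ (Fin.cons (ρ (x i) (x j)) fun m : Fin q' =>
                    x (j.succAbove ((Fin.castLT i
                      (lt_of_lt_of_le hij (Nat.lt_succ_iff.mp j.isLt))).succAbove m)))
              else 0) := by
          rw [← Finset.sum_neg_distrib]
          refine Finset.sum_congr rfl fun i _ => ?_
          rw [Fin.sum_univ_succ, dif_neg (show ¬ ((i.succ : Fin (q'+3)) : ℕ)
              < (((0 : Fin (q'+3)) : ℕ)) by simp), zero_add, ← Finset.sum_neg_distrib]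
          refine Finset.sum_congr rfl fun j _ => ?_
          by_cases hij : (i : ℕ) < (j : ℕ)
          · rw [dif_pos (show ((i.succ : Fin (q'+3)) : ℕ) < ((j.succ : Fin (q'+3)) : ℕ) by
                simp only [Fin.val_succ]; omega), dif_pos hij]
            rw [Fin.cons_succ, Fin.cons_succ,
              tuple2 a x i j _ (lt_of_lt_of_le hij (Nat.lt_succ_iff.mp j.isLt)),
              h.cons_cons_comm, smul_neg]
            rw [show ((-1 : ℤ) ^ (((i.succ : Fin (q'+3)) : ℕ) + ((j.succ : Fin (q'+3)) : ℕ) + 1))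
                = ((-1 : ℤ) ^ ((i : ℕ) + (j : ℕ) + 1)) from by
              rw [Fin.val_succ, Fin.val_succ,
                show (i : ℕ) + 1 + ((j : ℕ) + 1) + 1 = ((i : ℕ) + (j : ℕ) + 1) + 2 by ring,
                pow_add]
              norm_num]
            rfl
          · rw [dif_neg (show ¬ ((i.succ : Fin (q'+3)) : ℕ) < ((j.succ : Fin (q'+3)) : ℕ) by
                simp only [Fin.val_succ]; omega), dif_neg hij, neg_zero]
        rw [hB0, hB1]
        abel
      rw [hB]
      simp only [lieD]
      abel

theorem iota_cobound_zero (ψ : (Fin 0 → U) → V) (a : U) :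
    CoboundAux.iota a (D 0 ψ) = fun z => - lieD ρ θ Φ a ψ z := by
  funext z
  simp only [CoboundAux.iota, cobound, lieD, Fin.sum_univ_one, Fin.sum_univ_zero,
    Fin.cons_zero, Fin.val_zero, zero_add, pow_one, neg_one_zsmul, sub_zero]
  rw [show (Fin.elim0 : Fin 0 → U) = z from fin0_eq _ _]

theorem lieD_negsub_fun (a : U) {p : ℕ} (F G : (Fin p → U) → V) :
    lieD ρ θ Φ a (fun z => - F z - G z)
      = fun x => - lieD ρ θ Φ a F x - lieD ρ θ Φ a G x := by
  funext x
  rw [congrFun (lieD_sub_fun ρ θ Φ a (fun w => - F w) G) x,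
    congrFun (lieD_neg_fun ρ θ Φ a F) x]

theorem cobound_negsub (p : ℕ) (F G : (Fin p → U) → V) :
    D p (fun z => - F z - G z) = fun y => - D p F y - D p G y := by
  funext y
  rw [congrFun (cobound_sub ρ θ Φ p (fun w => - F w) G) y,
    congrFun (cobound_neg ρ θ Φ p F) y]

theorem update0_eq_cons {n : ℕ} (y : Fin (n+1) → U) (v : U) :
    Function.update y 0 v = Fin.cons v (Fin.tail y) := by
  funext m
  induction m using Fin.cases with
  | zero => rw [Function.update_self, Fin.cons_zero]
  | succ m' =>
      rw [Function.update_of_ne (Fin.succ_ne_zero m'), Fin.cons_succ]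
      rfl

/-- The coboundary of an alternating cochain is alternating. -/
theorem isAlt_cobound (hρalt : ∀ a : U, ρ a a = 0) :
    ∀ (q : ℕ) (ψ : (Fin q → U) → V), IsAltF q ψ → IsAltF (q+1) (D q ψ) := by
  intro q
  induction q with
  | zero =>
      intro ψ hψ
      constructor
      · intro x i b c
        have hi : i = 0 := Fin.ext (by omega)
        subst hi
        simp only [cobound, Fin.sum_univ_one, Function.update_self]
        rw [map_add, map_add, LinearMap.add_apply, smul_add]
      · intro x i j hij hx
        exact absurd (Fin.ext (by omega)) hij
  | succ q' IH =>
      intro ψ hψ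
      have hZK : ∀ (a : U) (w : Fin q' → U),
          lieD ρ θ Φ a ψ (Fin.cons a w)
            + D q' (CoboundAux.iota a ψ) (Fin.cons a w) = 0 := by
        intro a w
        have hlie : lieD ρ θ Φ a ψ (Fin.cons a w)
            = lieD ρ θ Φ a (CoboundAux.iota a ψ) w := by
          simp only [lieD, CoboundAux.iota, Fin.sum_univ_succ, Fin.cons_zero, Fin.cons_succ,
            Fin.update_cons_zero, update_cons_succ]
          rw [hρalt, hψ.cons_zero_val, zero_add]
        cases q' with
        | zero =>
            rw [hlie]
            simp only [lieD, CoboundAux.iota, cobound, Fin.sum_univ_one, Fin.sum_univ_zero,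
              Fin.val_zero, zero_add, pow_one, neg_one_zsmul, sub_zero, Fin.cons_zero]
            rw [show (Fin.elim0 : Fin 0 → U) = w from fin0_eq _ _]
            abel
        | succ q'' =>
            rw [hlie, cartan ρ θ Φ (hψ.iota a) a w]
            have hzz : CoboundAux.iota a (CoboundAux.iota a ψ) = fun _ => (0 : V) := by
              funext z
              refine hψ.alt _ 0 1 (Fin.ne_of_val_ne (by simp)) ?_
              rw [show (1 : Fin (q''+2)) = (0 : Fin (q''+1)).succ from rfl,
                Fin.cons_succ, Fin.cons_zero, Fin.cons_zero]
            rw [hzz, cobound_zero_fun]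
            abel
      constructor
      · intro y i b c
        induction i using Fin.cases with
        | zero =>
            rw [update0_eq_cons, update0_eq_cons, update0_eq_cons,
              cartan ρ θ Φ hψ, cartan ρ θ Φ hψ, cartan ρ θ Φ hψ,
              congrFun (lieD_add_a ρ θ Φ hψ b c) (Fin.tail y),
              iota_add_a hψ b c,
              congrFun (cobound_add ρ θ Φ q' (CoboundAux.iota b ψ)
                (CoboundAux.iota c ψ)) (Fin.tail y)]
            abel
        | succ i' =>
            rw [← Fin.cons_self_tail y, update_cons_succ, update_cons_succ, update_cons_succ,
              cartan ρ θ Φ hψ, cartan ρ θ Φ hψ, cartan ρ θ Φ hψ,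
              ((hψ.lieD ρ θ Φ (y 0)).add (Fin.tail y) i' b c :),
              ((IH _ (hψ.iota (y 0))).add (Fin.tail y) i' b c :)]
            abel
      · intro y i j hij hxy
        have key0 : ∀ (z : Fin (q'+2) → U) (j' : Fin (q'+1)), z 0 = z j'.succ →
            D (q'+1) ψ z = 0 := by
          intro z j' h0
          rw [← Fin.cons_self_tail z, cartan ρ θ Φ hψ]
          have hxj : Fin.tail z j' = z 0 := h0.symm
          rcases eq_or_ne j' 0 with rfl | hj'
          · have ht : Fin.tail z = Fin.cons (z 0) (Fin.tail (Fin.tail z)) := by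
              rw [← hxj]
              exact (Fin.cons_self_tail (Fin.tail z)).symm
            rw [ht, sub_eq_add_neg, ← neg_add, hZK, neg_zero]
          · have hswap_lie := (hψ.lieD ρ θ Φ (z 0)).swap
              (show (0 : Fin (q'+1)) ≠ j' from Ne.symm hj') (Fin.tail z)
            have hswap_D := (IH _ (hψ.iota (z 0))).swap
              (show (0 : Fin (q'+1)) ≠ j' from Ne.symm hj') (Fin.tail z)
            have h0' : (Fin.tail z ∘ Equiv.swap (0 : Fin (q'+1)) j') 0 = z 0 := by
              rw [Function.comp_apply, Equiv.swap_apply_left]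
              exact hxj
            have ht' : Fin.tail z ∘ Equiv.swap (0 : Fin (q'+1)) j'
                = Fin.cons (z 0) (Fin.tail (Fin.tail z ∘ Equiv.swap (0 : Fin (q'+1)) j')) := by
              rw [← h0']
              exact (Fin.cons_self_tail _).symm
            have hz := hZK (z 0) (Fin.tail (Fin.tail z ∘ Equiv.swap (0 : Fin (q'+1)) j'))
            rw [← ht', hswap_lie, hswap_D] at hz
            rw [sub_eq_add_neg]
            exact hz
        induction i using Fin.cases with
        | zero =>
            induction j using Fin.cases with
            | zero => exact absurd rfl hij
            | succ j' => exact key0 y j' hxy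
        | succ i' =>
            induction j using Fin.cases with
            | zero => exact key0 y i' hxy.symm
            | succ j' =>
                rw [← Fin.cons_self_tail y, cartan ρ θ Φ hψ]
                have hne : i' ≠ j' := fun hc => hij (by rw [hc])
                rw [(hψ.lieD ρ θ Φ (y 0)).alt (Fin.tail y) i' j' hne hxy,
                  (IH _ (hψ.iota (y 0))).alt (Fin.tail y) i' j' hne hxy]
                abel

/-- The Lie derivative commutes with the coboundary. -/
theorem lieD_cobound (hρalt : ∀ a : U, ρ a a = 0)
    (hρjac : ∀ a b c : U, ρ (ρ a b) c + ρ (ρ b c) a + ρ (ρ c a) b = 0)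
    (hθalt : ∀ x : V, θ x x = 0)
    (hθjac : ∀ x y z : V, θ (θ x y) z + θ (θ y z) x + θ (θ z x) y = 0)
    (hΦ : ∀ a b : U, Φ (ρ a b) = θ (Φ a) (Φ b)) :
    ∀ (l : ℕ) (ψ : (Fin l → U) → V), IsAltF l ψ → ∀ a : U,
      lieD ρ θ Φ a (D l ψ) = D l (lieD ρ θ Φ a ψ) := by
  intro l
  induction l with
  | zero =>
      intro ψ hψ a
      funext x
      simp only [lieD, cobound, Fin.sum_univ_one, Fin.sum_univ_succ, Fin.sum_univ_zero,
        Fin.val_zero, zero_add, add_zero, pow_one, neg_one_zsmul, sub_zero, map_neg,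
        Function.update_self]
      have hkey : θ (Φ (ρ a (x 0))) (ψ Fin.elim0)
          = θ (Φ a) (θ (Φ (x 0)) (ψ Fin.elim0)) - θ (Φ (x 0)) (θ (Φ a) (ψ Fin.elim0)) := by
        rw [hΦ, leib_of θ hθalt hθjac]
      rw [hkey]
      abel
  | succ m IHm =>
      intro ψ hψ a
      funext y
      rw [← Fin.cons_self_tail y]
      have hcb : ∀ c : U, CoboundAux.iota c (D (m+1) ψ)
          = fun z => - lieD ρ θ Φ c ψ z - D m (CoboundAux.iota c ψ) z :=
        fun c => funext fun z => cartan ρ θ Φ hψ c z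
      have e1 : lieD ρ θ Φ a (D (m+1) ψ) (Fin.cons (y 0) (Fin.tail y))
          = lieD ρ θ Φ a (CoboundAux.iota (y 0) (D (m+1) ψ)) (Fin.tail y)
            - CoboundAux.iota (ρ a (y 0)) (D (m+1) ψ) (Fin.tail y) :=
        congrFun (iota_lieD ρ θ Φ a (y 0) (D (m+1) ψ)) (Fin.tail y)
      have e2 : lieD ρ θ Φ a (CoboundAux.iota (y 0) (D (m+1) ψ)) (Fin.tail y)
          = - lieD ρ θ Φ a (lieD ρ θ Φ (y 0) ψ) (Fin.tail y)
            - lieD ρ θ Φ a (D m (CoboundAux.iota (y 0) ψ)) (Fin.tail y) := by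
        rw [hcb (y 0)]
        exact congrFun (lieD_negsub_fun ρ θ Φ a (lieD ρ θ Φ (y 0) ψ)
          (D m (CoboundAux.iota (y 0) ψ))) (Fin.tail y)
      have e3 : lieD ρ θ Φ a (D m (CoboundAux.iota (y 0) ψ))
          = D m (lieD ρ θ Φ a (CoboundAux.iota (y 0) ψ)) := IHm _ (hψ.iota (y 0)) a
      have e4 : CoboundAux.iota (ρ a (y 0)) (D (m+1) ψ) (Fin.tail y)
          = - lieD ρ θ Φ (ρ a (y 0)) ψ (Fin.tail y)
            - D m (CoboundAux.iota (ρ a (y 0)) ψ) (Fin.tail y) :=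
        congrFun (hcb (ρ a (y 0))) (Fin.tail y)
      have f1 : D (m+1) (lieD ρ θ Φ a ψ) (Fin.cons (y 0) (Fin.tail y))
          = - lieD ρ θ Φ (y 0) (lieD ρ θ Φ a ψ) (Fin.tail y)
            - D m (CoboundAux.iota (y 0) (lieD ρ θ Φ a ψ)) (Fin.tail y) :=
        cartan ρ θ Φ (hψ.lieD ρ θ Φ a) (y 0) (Fin.tail y)
      have f3 : D m (CoboundAux.iota (y 0) (lieD ρ θ Φ a ψ))
          = fun z => D m (lieD ρ θ Φ a (CoboundAux.iota (y 0) ψ)) z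
            - D m (CoboundAux.iota (ρ a (y 0)) ψ) z := by
        rw [iota_lieD ρ θ Φ a (y 0) ψ]
        exact cobound_sub ρ θ Φ m _ _
      have f4 : lieD ρ θ Φ a (lieD ρ θ Φ (y 0) ψ) (Fin.tail y)
          - lieD ρ θ Φ (y 0) (lieD ρ θ Φ a ψ) (Fin.tail y)
          = lieD ρ θ Φ (ρ a (y 0)) ψ (Fin.tail y) :=
        congrFun (lieD_lieD_comm ρ θ Φ hρalt hρjac hθalt hθjac hΦ hψ a (y 0)) (Fin.tail y)
      rw [e1, e2, congrFun e3 (Fin.tail y), e4, f1, congrFun f3 (Fin.tail y), ← f4]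
      abel

/-- Main statement: the coboundary squares to zero on alternating cochains. -/
theorem cobound_cobound (hρalt : ∀ a : U, ρ a a = 0)
    (hρjac : ∀ a b c : U, ρ (ρ a b) c + ρ (ρ b c) a + ρ (ρ c a) b = 0)
    (hθalt : ∀ x : V, θ x x = 0)
    (hθjac : ∀ x y z : V, θ (θ x y) z + θ (θ y z) x + θ (θ z x) y = 0)
    (hΦ : ∀ a b : U, Φ (ρ a b) = θ (Φ a) (Φ b)) :
    ∀ (p : ℕ) (ψ : (Fin p → U) → V), IsAltF p ψ →
      D (p+1) (D p ψ) = fun _ => (0 : V) := by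
  intro p
  induction p with
  | zero =>
      intro ψ hψ
      funext y
      rw [← Fin.cons_self_tail y, cartan ρ θ Φ (isAlt_cobound ρ θ Φ hρalt 0 ψ hψ) (y 0) (Fin.tail y),
        iota_cobound_zero ρ θ Φ ψ (y 0),
        congrFun (cobound_neg ρ θ Φ 0 (lieD ρ θ Φ (y 0) ψ)) (Fin.tail y),
        lieD_cobound ρ θ Φ hρalt hρjac hθalt hθjac hΦ 0 ψ hψ (y 0)]
      abel
  | succ m IHm =>
      intro ψ hψ
      funext y
      rw [← Fin.cons_self_tail y,
        cartan ρ θ Φ (isAlt_cobound ρ θ Φ hρalt (m+1) ψ hψ) (y 0) (Fin.tail y)]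
      have hcb : CoboundAux.iota (y 0) (D (m+1) ψ)
          = fun z => - lieD ρ θ Φ (y 0) ψ z - D m (CoboundAux.iota (y 0) ψ) z :=
        funext fun z => cartan ρ θ Φ hψ (y 0) z
      rw [hcb, congrFun (cobound_negsub ρ θ Φ (m+1) (lieD ρ θ Φ (y 0) ψ)
          (D m (CoboundAux.iota (y 0) ψ))) (Fin.tail y),
        IHm _ (hψ.iota (y 0)),
        lieD_cobound ρ θ Φ hρalt hρjac hθalt hθjac hΦ (m+1) ψ hψ (y 0)]
      abel

end Brackets



end CoboundAux

/-- The coboundary operator associated to the triple `(ρ, θ, Φ)` squares to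
zero: for every `p` and every alternating `p`-linear map `ψ ∈ ⋀^p(U,V)`,
`δ^(p+1)(δ^p ψ) = 0`. -/
theorem coboundary_squares_to_zero {k U V : Type*} [Field k]
    [AddCommGroup U] [Module k U] [AddCommGroup V] [Module k V]
    (ρ : U →ₗ[k] U →ₗ[k] U) (hρalt : ∀ a : U, ρ a a = 0)
    (hρjac : ∀ a b c : U, ρ (ρ a b) c + ρ (ρ b c) a + ρ (ρ c a) b = 0)
    (θ : V →ₗ[k] V →ₗ[k] V) (hθalt : ∀ x : V, θ x x = 0)
    (hθjac : ∀ x y z : V, θ (θ x y) z + θ (θ y z) x + θ (θ z x) y = 0)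
    (Φ : U →ₗ[k] V) (hΦ : ∀ a b : U, Φ (ρ a b) = θ (Φ a) (Φ b))
    (p : ℕ) (ψ : U [⋀^Fin p]→ₗ[k] V) :
    cobound (fun a b => ρ a b) (fun x y => θ x y) (fun a => Φ a) (p + 1)
      (cobound (fun a b => ρ a b) (fun x y => θ x y) (fun a => Φ a) p ⇑ψ) = 0 := by
  have hψ : CoboundAux.IsAltF p ⇑ψ := by
    constructor
    · intro x i a b
      exact ψ.toMultilinearMap.map_update_add x i a b
    · intro x i j hij hx
      exact ψ.map_eq_zero_of_eq x hx hij
  have h := CoboundAux.cobound_cobound ρ θ Φ hρalt hρjac hθalt hθjac hΦ p ⇑ψ hψ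
  exact h
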